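/- Let q be a squarefree positive integer and, for each prime p dividing q, let α_p be a complex number such that 1 − α_p·p^{−1/2} + p^{−1} ≠ 0 and 1 − (α_p²−1)·p^{−1} + (α_p²−1)·p^{−2} − p^{−3} ≠ 0. For each divisor ℓ of q define Lhalf(ℓ) := ∏_{p∣ℓ} (1 − α_p·p^{−1/2} + p^{−1})^{−1} and Lsym(ℓ) := ∏_{p∣ℓ} (1 − (α_p²−1)·p^{−1} + (α_p²−1)·p^{−2} − p^{−3})^{−1}. Then Σ_{ℓ∣q} (Lsym(ℓ)/Lhalf(ℓ)²)·(φ(ℓ)/ℓ) = 2^{ω(q)} · (ν(q)·φ(q)/q²) · (Lsym(q)/Lhalf(q)). (This is the second identity of Lemma 3.2 of the paper, with α_p = λ_f(p), Lhalf(ℓ) = L_ℓ(1/2,f), and Lsym(ℓ) = L_ℓ(1,sym²f).) -/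

import Mathlib

open Finset

lemma tot_cast (n : ℕ) : (Nat.totient n : ℂ) = n * ∏ p ∈ n.primeFactors, (1 - (p : ℂ)⁻¹) := by
  have h := Nat.totient_eq_mul_prod_factors n
  have h2 := congrArg (Rat.cast : ℚ → ℂ) h
  push_cast at h2
  simpa using h2

theorem stmt_1 (q : ℕ) (hq : Squarefree q) (α : ℕ → ℂ)
    (h1 : ∀ p ∈ q.primeFactors, 1 - α p * (p : ℂ) ^ (-(1 : ℂ) / 2) + (p : ℂ)⁻¹ ≠ 0)
    (h2 : ∀ p ∈ q.primeFactors,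
      1 - (α p ^ 2 - 1) * (p : ℂ)⁻¹ + (α p ^ 2 - 1) * ((p : ℂ)⁻¹) ^ 2 - ((p : ℂ)⁻¹) ^ 3 ≠ 0)
    (Lhalf Lsym : ℕ → ℂ)
    (hLhalf : ∀ ℓ : ℕ, Lhalf ℓ = ∏ p ∈ ℓ.primeFactors,
      (1 - α p * (p : ℂ) ^ (-(1 : ℂ) / 2) + (p : ℂ)⁻¹)⁻¹)
    (hLsym : ∀ ℓ : ℕ, Lsym ℓ = ∏ p ∈ ℓ.primeFactors,
      (1 - (α p ^ 2 - 1) * (p : ℂ)⁻¹ + (α p ^ 2 - 1) * ((p : ℂ)⁻¹) ^ 2 - ((p : ℂ)⁻¹) ^ 3)⁻¹) :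
    ∑ ℓ ∈ q.divisors, Lsym ℓ / (Lhalf ℓ) ^ 2 * ((Nat.totient ℓ : ℂ) / (ℓ : ℂ)) =
      2 ^ q.primeFactors.card *
        (((q : ℂ) * ∏ p ∈ q.primeFactors, (1 + (p : ℂ)⁻¹)) * (Nat.totient q : ℂ) / (q : ℂ) ^ 2) *
        (Lsym q / Lhalf q) := by
  classical
  have hq0 : q ≠ 0 := hq.ne_zero
  set H : ℕ → ℂ := fun p => 1 - α p * (p : ℂ) ^ (-(1 : ℂ) / 2) + (p : ℂ)⁻¹ with hH
  set S : ℕ → ℂ := fun p =>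
    1 - (α p ^ 2 - 1) * (p : ℂ)⁻¹ + (α p ^ 2 - 1) * ((p : ℂ)⁻¹) ^ 2 - ((p : ℂ)⁻¹) ^ 3 with hS
  set g : ℕ → ℂ := fun p => (S p)⁻¹ * (H p) ^ 2 * (1 - (p : ℂ)⁻¹) with hg
  have h1' : ∀ p ∈ q.primeFactors, H p ≠ 0 := by simp only [hH]; exact h1
  have h2' : ∀ p ∈ q.primeFactors, S p ≠ 0 := by simp only [hS]; exact h2
  have hLhalf' : ∀ ℓ : ℕ, Lhalf ℓ = ∏ p ∈ ℓ.primeFactors, (H p)⁻¹ := by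
    simp only [hH]; exact hLhalf
  have hLsym' : ∀ ℓ : ℕ, Lsym ℓ = ∏ p ∈ ℓ.primeFactors, (S p)⁻¹ := by
    simp only [hS]; exact hLsym
  -- Step A: each summand is a product over prime factors
  have key : ∀ ℓ ∈ q.divisors,
      Lsym ℓ / (Lhalf ℓ) ^ 2 * ((Nat.totient ℓ : ℂ) / (ℓ : ℂ)) = ∏ p ∈ ℓ.primeFactors, g p := by
    intro ℓ hℓ
    have hℓ0 : (ℓ : ℂ) ≠ 0 := Nat.cast_ne_zero.mpr (Nat.pos_of_mem_divisors hℓ).ne'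
    have htot : (Nat.totient ℓ : ℂ) / (ℓ : ℂ) = ∏ p ∈ ℓ.primeFactors, (1 - (p : ℂ)⁻¹) := by
      rw [tot_cast, mul_comm, mul_div_assoc, div_self hℓ0, mul_one]
    rw [hLsym', hLhalf', htot, ← Finset.prod_pow, ← Finset.prod_div_distrib,
      ← Finset.prod_mul_distrib]
    refine Finset.prod_congr rfl fun p hp => ?_
    rw [hg, div_eq_mul_inv, inv_pow, inv_inv]
  rw [Finset.sum_congr rfl key]
  -- Step B: sum over divisors = sum over subsets of prime factors
  have hsum : ∑ ℓ ∈ q.divisors, ∏ p ∈ ℓ.primeFactors, g p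
      = ∑ t ∈ q.primeFactors.powerset, ∏ p ∈ t, g p := by
    rw [← Nat.divisors_filter_squarefree_of_squarefree hq,
      Nat.sum_divisors_filter_squarefree hq0, Nat.factors_eq]
    refine Finset.sum_congr rfl fun t ht => ?_
    rw [Finset.mem_powerset] at ht
    rw [Finset.prod_val, Function.id_def,
      Nat.primeFactors_prod fun p hp => Nat.prime_of_mem_primeFactors (ht hp)]
  rw [hsum]
  -- Step C: binomial expansion
  have hC : ∑ t ∈ q.primeFactors.powerset, ∏ p ∈ t, g p
      = ∏ p ∈ q.primeFactors, (1 + g p) := by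
    rw [Finset.prod_congr rfl fun p _ => add_comm (1 : ℂ) (g p), Finset.prod_add]
    simp
  rw [hC]
  -- Step D: local identity
  have hloc : ∀ p ∈ q.primeFactors,
      1 + g p = 2 * ((1 + (p : ℂ)⁻¹) * (1 - (p : ℂ)⁻¹)) * ((S p)⁻¹ * H p) := by
    intro p hp
    have hp' := Nat.prime_of_mem_primeFactors hp
    have hp0 : (p : ℂ) ≠ 0 := Nat.cast_ne_zero.mpr hp'.pos.ne'
    have hx : (p : ℂ) ^ (-(1 : ℂ) / 2) * (p : ℂ) ^ (-(1 : ℂ) / 2) = (p : ℂ)⁻¹ := by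
      rw [← Complex.cpow_add _ _ hp0]
      norm_num
      exact Complex.cpow_neg_one _
    have hSp := h2' p hp
    have hkey : S p + (H p) ^ 2 * (1 - (p : ℂ)⁻¹)
        = 2 * ((1 + (p : ℂ)⁻¹) * (1 - (p : ℂ)⁻¹)) * H p := by
      simp only [hS, hH, ← hx]
      ring
    have h1g : 1 + g p = (S p)⁻¹ * (S p + (H p) ^ 2 * (1 - (p : ℂ)⁻¹)) := by
      rw [hg]
      field_simp
    rw [h1g, hkey]
    ring
  rw [Finset.prod_congr rfl hloc]
  -- Step E: finish
  have hq0' : (q : ℂ) ≠ 0 := Nat.cast_ne_zero.mpr hq0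
  rw [Finset.prod_mul_distrib, Finset.prod_mul_distrib, Finset.prod_mul_distrib,
    Finset.prod_const, hLsym' q, hLhalf' q, tot_cast q, Finset.prod_inv_distrib,
    Finset.prod_inv_distrib]
  have hDne : (∏ p ∈ q.primeFactors, H p) ≠ 0 := Finset.prod_ne_zero_iff.mpr h1'
  have hSne : (∏ p ∈ q.primeFactors, S p) ≠ 0 := Finset.prod_ne_zero_iff.mpr h2'
  field_simp
  rw [Finset.prod_div_distrib, mul_assoc _ (_ / _), div_mul_cancel₀ _ hSne]
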